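/- Let C be an abelian category. Then C is well-powered if and only if C◁Set is well-powered. -/

import Mathlib

open CategoryTheory Limits

universe v u

/-- An object of the set-decorated category `C ◁ Set`: a triple `(c, S, f)` with `c` an
object of `C`, `S` a set, and `f : S → End c`, encoded as a function `ZFSet → End c`
vanishing outside `S` (the paper's convention that `f` evaluates to `0` outside `S`). -/
structure DecObj (C : Type u) [Category.{v} C] [Preadditive C] : Type (max u v 2) where
  c : C
  S : ZFSet.{0}
  f : ZFSet.{0} → (c ⟶ c)
  hf : ∀ s : ZFSet.{0}, s ∉ S → f s = 0

namespace DecObj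

variable {C : Type u} [Category.{v} C] [Preadditive C]

/-- `ψ : c ⟶ c'` intertwines the decorations of `X` and `Y`; by the vanishing-outside-`S`
convention this is exactly the three-case condition of the paper. -/
def Intertwines (X Y : DecObj C) (ψ : X.c ⟶ Y.c) : Prop :=
  ∀ s : ZFSet.{0}, X.f s ≫ ψ = ψ ≫ Y.f s

/-- Morphisms in `C ◁ Set`. -/
@[ext]
structure Hom (X Y : DecObj C) where
  ψ : X.c ⟶ Y.c
  comm : Intertwines X Y ψ

instance : Category (DecObj C) where
  Hom := Hom
  id X := ⟨𝟙 X.c, fun s => by simp [Intertwines]⟩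
  comp g h := ⟨g.ψ ≫ h.ψ, fun s => by
    rw [← Category.assoc, g.comm s, Category.assoc, h.comm s, Category.assoc]⟩

@[simp] theorem id_ψ (X : DecObj C) : Hom.ψ (𝟙 X) = 𝟙 X.c := rfl

@[simp] theorem comp_ψ {X Y Z : DecObj C} (g : X ⟶ Y) (h : Y ⟶ Z) :
    (g ≫ h).ψ = g.ψ ≫ h.ψ := rfl

/-- The forgetful functor `U : C ◁ Set ⥤ C`. -/
def forgetDec (C : Type u) [Category.{v} C] [Preadditive C] : DecObj C ⥤ C where
  obj X := X.c
  map g := g.ψ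

end DecObj


namespace DecObj

variable {C : Type u} [Category.{v} C] [Abelian C]

theorem mono_of_mono_ψ {X Y : DecObj C} (g : X ⟶ Y) (h : Mono g.ψ) : Mono g := by
  constructor
  intro Z a b w
  apply Hom.ext
  have := congrArg Hom.ψ w
  simp only [comp_ψ] at this
  exact h.right_cancellation _ _ this

theorem mono_ψ_of_mono {X Y : DecObj C} (g : X ⟶ Y) [Mono g] : Mono g.ψ := by
  let K : DecObj C :=
    { c := kernel g.ψ
      S := X.S
      f := fun s => kernel.lift g.ψ (kernel.ι g.ψ ≫ X.f s) (by
        rw [Category.assoc, g.comm s, ← Category.assoc, kernel.condition, zero_comp])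
      hf := fun s hs => by
        rw [← cancel_mono (kernel.ι g.ψ), kernel.lift_ι, X.hf s hs, comp_zero, zero_comp] }
  let h1 : K ⟶ X := ⟨kernel.ι g.ψ, fun s => by simp [K, kernel.lift_ι]⟩
  let h2 : K ⟶ X := ⟨0, fun s => by simp [Intertwines]⟩
  have w : h1 ≫ g = h2 ≫ g := by
    apply Hom.ext
    show kernel.ι g.ψ ≫ g.ψ = (0 : K.c ⟶ X.c) ≫ g.ψ
    rw [kernel.condition, zero_comp]
  have h12 : h1 = h2 := (cancel_mono g).1 w
  have hz : kernel.ι g.ψ = 0 := congrArg Hom.ψ h12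
  exact Abelian.mono_of_kernel_ι_eq_zero _ hz

/-- Trivial decoration of an object of `C`. -/
def triv (c : C) : DecObj C := ⟨c, ∅, fun _ => 0, fun _ _ => rfl⟩

/-- Trivial decoration of a morphism. -/
def trivHom {a b : C} (f : a ⟶ b) : triv (C := C) a ⟶ triv b :=
  ⟨f, fun _ => by simp [triv]⟩

end DecObj

/-- for abelian `C`, `C` is well-powered iff `C ◁ Set` is well-powered. -/
theorem decoration_wellPowered_iff (C : Type u) [Category.{v} C] [Abelian C] :
    WellPowered.{v} C ↔ WellPowered.{v} (DecObj C) := by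
  constructor
  · intro hC
    constructor
    intro X
    haveI : ∀ {A : DecObj C} (g : A ⟶ X) [Mono g], Mono g.ψ :=
      fun g _ => DecObj.mono_ψ_of_mono g
    let F : Subobject X → Subobject X.c :=
      Subobject.lift (fun A g _ => Subobject.mk (g.ψ))
        (by
          intro A B f g _ _ i w
          exact Subobject.mk_eq_mk_of_comm _ _
            ((DecObj.forgetDec C).mapIso i) (by
              have := congrArg DecObj.Hom.ψ w
              exact this))
    have hinj : Function.Injective F := by
      intro P Q
      refine Subobject.ind₂ (p := fun P Q => F P = F Q → P = Q) ?_ P Q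
      intro A B f g mf mg h
      simp only [F, Subobject.lift_mk] at h
      haveI mgψ : Mono g.ψ := DecObj.mono_ψ_of_mono g
      haveI mfψ : Mono f.ψ := DecObj.mono_ψ_of_mono f
      let i : A.c ≅ B.c := Subobject.isoOfMkEqMk _ _ h
      have hi : i.hom ≫ g.ψ = f.ψ := Subobject.ofMkLEMk_comp h.le
      have comm : DecObj.Intertwines A B i.hom := by
        intro s
        rw [← cancel_mono g.ψ]
        simp only [Category.assoc]
        rw [hi, g.comm s, f.comm s, ← hi, Category.assoc]
      have comm' : DecObj.Intertwines B A i.inv := by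
        intro s
        rw [← cancel_mono i.hom]
        simp only [Category.assoc, Iso.inv_hom_id, Category.comp_id, comm s,
          Iso.inv_hom_id_assoc]
      let I : A ≅ B := ⟨⟨i.hom, comm⟩, ⟨i.inv, comm'⟩,
        DecObj.Hom.ext (by simp), DecObj.Hom.ext (by simp)⟩
      exact Subobject.mk_eq_mk_of_comm _ _ I (DecObj.Hom.ext (by simpa [I] using hi))
    exact small_of_injective (f := F) hinj
  · intro hD
    constructor
    intro c
    haveI : ∀ {a b : C} (f : a ⟶ b) [Mono f], Mono (DecObj.trivHom (C := C) f) :=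
      fun f mf => DecObj.mono_of_mono_ψ _ mf
    let F : Subobject c → Subobject (DecObj.triv (C := C) c) :=
      Subobject.lift (fun a f _ => Subobject.mk (DecObj.trivHom f))
        (by
          intro a b f g mf mg i w
          refine Subobject.mk_eq_mk_of_comm _ _
            (Iso.mk (DecObj.trivHom i.hom) (DecObj.trivHom i.inv)
              (DecObj.Hom.ext (by exact i.hom_inv_id))
              (DecObj.Hom.ext (by exact i.inv_hom_id))) ?_
          exact DecObj.Hom.ext (by exact w))
    have hinj : Function.Injective F := by
      intro P Q
      refine Subobject.ind₂ (p := fun P Q => F P = F Q → P = Q) ?_ P Q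
      intro a b f g mf mg h
      simp only [F, Subobject.lift_mk] at h
      let i := Subobject.isoOfMkEqMk _ _ h
      have hi : i.hom ≫ DecObj.trivHom g = DecObj.trivHom f := Subobject.ofMkLEMk_comp h.le
      exact Subobject.mk_eq_mk_of_comm _ _ ((DecObj.forgetDec C).mapIso i)
        (by exact congrArg DecObj.Hom.ψ hi)
    exact small_of_injective (f := F) hinj
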